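/- arXiv:2504.06047 — 5 statements merged into one kernel-verified Lean document; each statement's English description precedes it below -/
import Mathlib

section
/- Let V be a fluid algebra with operator D, and let X : ℝ → V be a differentiable curve solving the associated Euler equation, i.e. (Ẋ(t), Z) = {X(t), D X(t), Z} for all Z ∈ V and all t ∈ ℝ. Then the energy t ↦ (X(t), X(t)) is constant in t. -/
open scoped RealInnerProductSpace

/-- **Conservation of energy for a fluid algebra.**
A fluid algebra is a finite-dimensional real vector space `V` with a positive definite
inner product `⟪·,·⟫`, a symmetric nondegenerate bilinear form `B` (the linking form),
and an alternating trilinear form `T` (the triple intersection form).  `D` is the unique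
linear operator with `B x y = ⟪D x, y⟫`.  If `X : ℝ → V` is differentiable and solves the
associated Euler equation `⟪Ẋ(t), Z⟫ = T (X t) (D (X t)) Z` for all `Z` and `t`, then the
energy `t ↦ ⟪X t, X t⟫` is constant. -/
theorem fluid_algebra_energy_invariant
    {V : Type*} [NormedAddCommGroup V] [InnerProductSpace ℝ V] [FiniteDimensional ℝ V]
    (B : V →ₗ[ℝ] V →ₗ[ℝ] ℝ)
    (hBsymm : ∀ x y : V, B x y = B y x)
    (hBnondeg : ∀ x : V, (∀ y : V, B x y = 0) → x = 0)
    (T : AlternatingMap ℝ V ℝ (Fin 3))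
    (D : V →ₗ[ℝ] V)
    (hD : ∀ x y : V, B x y = ⟪D x, y⟫)
    (X X' : ℝ → V)
    (hX : ∀ t : ℝ, HasDerivAt X (X' t) t)
    (hEuler : ∀ t : ℝ, ∀ Z : V, ⟪X' t, Z⟫ = T ![X t, D (X t), Z]) :
    ∀ s t : ℝ, ⟪X s, X s⟫ = ⟪X t, X t⟫ := by
  have hE : ∀ t : ℝ, HasDerivAt (fun t => ⟪X t, X t⟫) 0 t := by
    intro t
    have h := (hX t).inner ℝ (hX t)
    have hz : ⟪X' t, X t⟫ = 0 := by
      rw [hEuler t (X t)]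
      exact T.map_eq_zero_of_eq _ (i := 0) (j := 2) rfl (by decide)
    have hz' : ⟪X t, X' t⟫ = 0 := by rw [real_inner_comm]; exact hz
    simpa [hz, hz'] using h
  intro s t
  have := is_const_of_deriv_eq_zero (f := fun t => ⟪X t, X t⟫)
    (fun u => (hE u).differentiableAt) (fun u => (hE u).deriv) s t
  simpa using this
end

section
/- Let V be a fluid algebra with operator D, and let X : ℝ → V be a differentiable curve solving the associated Euler equation, i.e. (Ẋ(t), Z) = {X(t), D X(t), Z} for all Z ∈ V and all t ∈ ℝ. Then the helicity t ↦ (X(t), D X(t)) is constant in t. -/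
open scoped RealInnerProductSpace

/-- **Conservation of helicity for a fluid algebra.**
A fluid algebra is a finite-dimensional real vector space `V` with a positive definite
inner product `⟪·,·⟫`, a symmetric nondegenerate bilinear form `B` (the linking form),
and an alternating trilinear form `T` (the triple intersection form).  `D` is the unique
linear operator with `B x y = ⟪D x, y⟫`.  If `X : ℝ → V` is differentiable and solves the
associated Euler equation `⟪Ẋ(t), Z⟫ = T (X t) (D (X t)) Z` for all `Z` and `t`, then the
helicity `t ↦ ⟪X t, D (X t)⟫` is constant. -/
theorem fluid_algebra_helicity_invariant
    {V : Type*} [NormedAddCommGroup V] [InnerProductSpace ℝ V] [FiniteDimensional ℝ V]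
    (B : V →ₗ[ℝ] V →ₗ[ℝ] ℝ)
    (hBsymm : ∀ x y : V, B x y = B y x)
    (hBnondeg : ∀ x : V, (∀ y : V, B x y = 0) → x = 0)
    (T : AlternatingMap ℝ V ℝ (Fin 3))
    (D : V →ₗ[ℝ] V)
    (hD : ∀ x y : V, B x y = ⟪D x, y⟫)
    (X X' : ℝ → V)
    (hX : ∀ t : ℝ, HasDerivAt X (X' t) t)
    (hEuler : ∀ t : ℝ, ∀ Z : V, ⟪X' t, Z⟫ = T ![X t, D (X t), Z]) :
    ∀ s t : ℝ, ⟪X s, D (X s)⟫ = ⟪X t, D (X t)⟫ := by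
  -- D is symmetric w.r.t. the inner product
  have hDsymm : ∀ x y : V, ⟪x, D y⟫ = ⟪D x, y⟫ := by
    intro x y
    rw [real_inner_comm, ← hD, hBsymm, hD]
  -- the helicity has zero derivative
  have hderiv : ∀ t : ℝ, HasDerivAt (fun t => ⟪X t, D (X t)⟫) 0 t := by
    intro t
    have hDX : HasDerivAt (fun t => D (X t)) (D (X' t)) t :=
      (D.toContinuousLinearMap.hasFDerivAt.comp_hasDerivAt t (hX t))
    have h := (hX t).inner ℝ hDX
    have h2 : ⟪X' t, D (X t)⟫ = 0 := by
      rw [hEuler t (D (X t))]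
      apply T.map_eq_zero_of_eq _ _ (by decide : (1 : Fin 3) ≠ 2)
      simp
    have h1 : ⟪X t, D (X' t)⟫ = ⟪X' t, D (X t)⟫ := by
      rw [hDsymm]; exact real_inner_comm _ _
    have hz : ⟪X t, D (X' t)⟫ + ⟪X' t, D (X t)⟫ = 0 := by rw [h1, h2]; ring
    rwa [hz] at h
  intro s t
  have : ∀ u v : ℝ, (fun t => ⟪X t, D (X t)⟫) u = (fun t => ⟪X t, D (X t)⟫) v := by
    intro u v
    exact is_const_of_deriv_eq_zero (fun x => (hderiv x).differentiableAt)
      (fun x => (hderiv x).deriv) u v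
  exact this s t
end

section
/- Let N ≥ 3 be an odd integer. The quadratic form Q on the space of functions u : (ℤ/N)³ → ℝ defined by Q(u) = Σ_{a,b ∈ (ℤ/N)³} u(a) u(b) · 2^{−‖a−b‖₁} · [‖a−b‖_∞ ≤ 1] is positive definite, where for c ∈ (ℤ/N)³ the norms ‖c‖₁ and ‖c‖_∞ are computed from the representatives of the coordinates of c in {−(N−1)/2, …, (N−1)/2} ⊂ ℤ, and [·] denotes the indicator. -/
open Finset

/-- If `f g + f (g + e) = 0` for all `g`, and the ambient group has odd exponent dividing
behavior (here `(ZMod N)^3` with `N` odd), then `f = 0`. -/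
lemma aux_shiftInj {N : ℕ} [NeZero N] (hNodd : Odd N)
    (e : Fin 3 → ZMod N) (f : (Fin 3 → ZMod N) → ℝ)
    (h : ∀ g, f g + f (g + e) = 0) : ∀ g, f g = 0 := by
  have hstep : ∀ g, f (g + e) = - f g := fun g => by linarith [h g]
  have key : ∀ k : ℕ, ∀ g, f (g + k • e) = (-1:ℝ)^k * f g := by
    intro k
    induction k with
    | zero => intro g; simp
    | succ k ih =>
      intro g
      have harg : g + (k+1) • e = (g + e) + k • e := by
        rw [succ_nsmul]; abel
      rw [harg, ih, hstep, pow_succ]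
      ring
  intro g
  have hNe : (N • e : Fin 3 → ZMod N) = 0 := by
    funext i
    simp [nsmul_eq_mul, ZMod.natCast_self]
  have hk := key N g
  rw [hNe, add_zero, hNodd.neg_one_pow] at hk
  linarith

/-- Let `N ≥ 3` be odd.  The quadratic form on functions `u : (ℤ/N)³ → ℝ` given by
`Q(u) = Σ_{a,b} u(a) u(b) 2^{-‖a-b‖₁} [‖a-b‖_∞ ≤ 1]` is positive definite, where the norms
of `c ∈ (ℤ/N)³` are computed from the representatives of least absolute value of the
coordinates of `c` (i.e. representatives in `{-(N-1)/2, …, (N-1)/2}`). -/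
theorem cubical_metric_posDef
    (N : ℕ) [NeZero N] (hN : 3 ≤ N) (hNodd : Odd N)
    (Q : ((Fin 3 → ZMod N) → ℝ) → ℝ)
    (hQ : ∀ u : (Fin 3 → ZMod N) → ℝ,
      Q u = ∑ a : Fin 3 → ZMod N, ∑ b : Fin 3 → ZMod N,
        u a * u b * ((2 : ℝ) ^ (-(∑ i : Fin 3, |((a - b) i).valMinAbs|)) *
          (if (Finset.univ.sup fun i : Fin 3 => ((a - b) i).valMinAbs.natAbs) ≤ 1
            then 1 else 0))) :
    ∀ u : (Fin 3 → ZMod N) → ℝ, u ≠ 0 → 0 < Q u := by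
  haveI : Fact (1 < N) := ⟨by omega⟩
  -- basic facts in ZMod N
  have h10 : (1 : ZMod N) ≠ 0 := one_ne_zero
  have h20 : (2 : ZMod N) ≠ 0 := by
    intro h
    have h2 : ((2 : ℕ) : ZMod N) = 0 := by push_cast; exact h
    rw [ZMod.natCast_eq_zero_iff] at h2
    have := Nat.le_of_dvd (by norm_num) h2
    omega
  have hn10 : (-1 : ZMod N) ≠ 0 := by
    simpa using h10
  have hn11 : (-1 : ZMod N) ≠ 1 := by
    intro h
    apply h20
    linear_combination -h
  have h21 : (2 : ZMod N) ≠ 1 := by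
    intro h
    apply h10
    linear_combination h
  -- valMinAbs facts
  have v0 : (0 : ZMod N).valMinAbs = 0 := ZMod.valMinAbs_zero N
  have v1 : (1 : ZMod N).valMinAbs = 1 := by
    have := ZMod.valMinAbs_natCast_of_le_half (n := N) (a := 1) (by omega)
    simpa using this
  have vn1 : (-1 : ZMod N).valMinAbs = -1 := by
    have hv1 : (1 : ZMod N).val = 1 := ZMod.val_one N
    have := ZMod.valMinAbs_neg_of_ne_half (n := N) (a := 1) (by omega)
    rw [this, v1]
  have hmem : ∀ x : ZMod N, x.valMinAbs.natAbs ≤ 1 ↔ (x = 0 ∨ x = 1 ∨ x = -1) := by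
    intro x
    constructor
    · intro h
      have hx := ZMod.coe_valMinAbs x
      have : x.valMinAbs = 0 ∨ x.valMinAbs = 1 ∨ x.valMinAbs = -1 := by omega
      rcases this with h' | h' | h' <;> rw [h'] at hx <;> push_cast at hx
      · exact Or.inl hx.symm
      · exact Or.inr (Or.inl hx.symm)
      · exact Or.inr (Or.inr hx.symm)
    · rintro (rfl | rfl | rfl) <;> simp [v0, v1, vn1]
  -- the one-dimensional kernel and the square-root function
  set k : ZMod N → ℝ := fun x =>
    (2 : ℝ) ^ (-(|x.valMinAbs|)) * (if x.valMinAbs.natAbs ≤ 1 then 1 else 0) with hk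
  set m : ZMod N → ℝ := fun x => if x = 0 ∨ x = 1 then (1:ℝ) else 0 with hm
  -- split of m into two indicators
  have msplit : ∀ x y : ZMod N,
      m (x - y) = (if y = x then (1:ℝ) else 0) + (if y = x - 1 then 1 else 0) := by
    intro x y
    have hxx : x ≠ x - 1 := by
      intro h
      apply h10
      linear_combination h
    by_cases h1 : y = x
    · subst h1
      simp [hm, hxx]
    · by_cases h2 : y = x - 1
      · subst h2
        have h3 : x - (x - 1) = 1 := by ring
        simp [hm, h3, Ne.symm hxx, if_neg (Ne.symm h1)]
      · have hx0 : x - y ≠ 0 := fun h => h1 (by linear_combination -h)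
        have hx1 : x - y ≠ 1 := fun h => h2 (by linear_combination -h)
        simp [hm, hx0, hx1, h1, Ne.symm h1, h2]
  -- one-variable form of the key identity
  have keyk1 : ∀ x : ZMod N, k x = (1/2) * (m (-x) + m (1 - x)) := by
    intro x
    by_cases hx0 : x = 0
    · subst hx0
      norm_num [hk, hm, v0]
    · by_cases hx1 : x = 1
      · subst hx1
        have hn : ¬((-1 : ZMod N) = 0 ∨ (-1 : ZMod N) = 1) := by
          rintro (h | h)
          · exact hn10 h
          · exact hn11 h
        norm_num [hk, hm, v1, hn, hn10, hn11]
      · by_cases hxn1 : x = -1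
        · subst hxn1
          have h2 : (1 : ZMod N) - (-1) = 2 := by ring
          have hn : ¬((2 : ZMod N) = 0 ∨ (2 : ZMod N) = 1) := by
            rintro (h | h)
            · exact h20 h
            · exact h21 h
          norm_num [hk, hm, vn1, h2, hn]
        · have hna : ¬ x.valMinAbs.natAbs ≤ 1 := by
            rw [hmem]
            push_neg
            exact ⟨hx0, hx1, hxn1⟩
          have hm1 : ¬((-x : ZMod N) = 0 ∨ (-x : ZMod N) = 1) := by
            rintro (h | h)
            · exact hx0 (by linear_combination -h)
            · exact hxn1 (by linear_combination -h)
          have hm2 : ¬((1 - x : ZMod N) = 0 ∨ (1 - x : ZMod N) = 1) := by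
            rintro (h | h)
            · exact hx1 (by linear_combination -h)
            · exact hx0 (by linear_combination -h)
          have hA : (-x : ZMod N) ≠ 1 := fun h => hxn1 (by linear_combination -h)
          have hB : (1 - x : ZMod N) ≠ 0 := fun h => hx1 (by linear_combination -h)
          simp [hk, hm, hna, hx0, hx1, hA, hB]
  -- key identity: k (p - q) = (1/2) * sum over s of m(p-s) m(q-s)
  have keyk : ∀ p q : ZMod N, k (p - q) = (1/2) * ∑ s : ZMod N, m (p - s) * m (q - s) := by
    intro p q
    have hsum : ∑ s : ZMod N, m (p - s) * m (q - s) = m (q - p) + m (q - (p - 1)) := by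
      simp only [msplit p, add_mul, ite_mul, one_mul, zero_mul, Finset.sum_add_distrib,
        Finset.sum_ite_eq' Finset.univ, Finset.mem_univ, if_true]
    rw [hsum]
    have hq1 : q - (p - 1) = 1 - (p - q) := by ring
    have hq0 : q - p = -(p - q) := by ring
    rw [hq0, hq1]
    exact keyk1 (p - q)
  -- the kernel factorizes as a product over coordinates
  have hker : ∀ a b : Fin 3 → ZMod N,
      (2 : ℝ) ^ (-(∑ i : Fin 3, |((a - b) i).valMinAbs|)) *
        (if (Finset.univ.sup fun i : Fin 3 => ((a - b) i).valMinAbs.natAbs) ≤ 1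
          then (1:ℝ) else 0) = ∏ i : Fin 3, k ((a - b) i) := by
    intro a b
    have hz : ∀ f : Fin 3 → ℤ, (2:ℝ) ^ (∑ i : Fin 3, f i) = ∏ i : Fin 3, (2:ℝ) ^ (f i) := by
      intro f
      rw [Fin.sum_univ_three, Fin.prod_univ_three, zpow_add₀ (two_ne_zero),
        zpow_add₀ (two_ne_zero)]
    have h1 : (2 : ℝ) ^ (-(∑ i : Fin 3, |((a - b) i).valMinAbs|))
        = ∏ i : Fin 3, (2:ℝ) ^ (-(|((a - b) i).valMinAbs|)) := by
      rw [← hz]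
      congr 1
      rw [← Finset.sum_neg_distrib]
    have hiff : ((Finset.univ.sup fun i : Fin 3 => ((a - b) i).valMinAbs.natAbs) ≤ 1)
        ↔ ∀ i : Fin 3, ((a - b) i).valMinAbs.natAbs ≤ 1 := by
      simp [Finset.sup_le_iff]
    have h2 : (if (Finset.univ.sup fun i : Fin 3 => ((a - b) i).valMinAbs.natAbs) ≤ 1
          then (1:ℝ) else 0)
        = ∏ i : Fin 3, (if ((a - b) i).valMinAbs.natAbs ≤ 1 then (1:ℝ) else 0) := by
      simp only [Fintype.prod_boole, hiff]
      convert rfl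
    rw [h1, h2, ← Finset.prod_mul_distrib]
  -- main argument
  intro u hu
  set P : (Fin 3 → ZMod N) → (Fin 3 → ZMod N) → ℝ :=
    fun a g => ∏ i : Fin 3, m (a i - g i) with hP
  set V : (Fin 3 → ZMod N) → ℝ := fun g => ∑ a : Fin 3 → ZMod N, u a * P a g with hVdef
  have hprod : ∀ a b : Fin 3 → ZMod N,
      (∏ i : Fin 3, k ((a - b) i))
        = (1/8 : ℝ) * ∑ g : Fin 3 → ZMod N, P a g * P b g := by
    intro a b
    have h1 : ∀ i : Fin 3,
        k ((a - b) i) = (1/2 : ℝ) * ∑ s : ZMod N, m (a i - s) * m (b i - s) := by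
      intro i
      have hab : (a - b) i = a i - b i := rfl
      rw [hab, keyk]
    calc ∏ i : Fin 3, k ((a - b) i)
        = ∏ i : Fin 3, ((1/2 : ℝ) * ∑ s : ZMod N, m (a i - s) * m (b i - s)) :=
          Finset.prod_congr rfl fun i _ => h1 i
      _ = (1/8 : ℝ) * ∏ i : Fin 3, ∑ s : ZMod N, m (a i - s) * m (b i - s) := by
          rw [Finset.prod_mul_distrib, Finset.prod_const]
          norm_num
      _ = (1/8 : ℝ) * ∑ g : Fin 3 → ZMod N, ∏ i : Fin 3, (m (a i - g i) * m (b i - g i)) := by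
          rw [Finset.prod_univ_sum, Fintype.piFinset_univ]
      _ = (1/8 : ℝ) * ∑ g : Fin 3 → ZMod N, P a g * P b g := by
          congr 1
          exact Finset.sum_congr rfl fun g _ => Finset.prod_mul_distrib
  have hQsq : Q u = (1/8 : ℝ) * ∑ g : Fin 3 → ZMod N, (V g)^2 := by
    rw [hQ u]
    calc ∑ a : Fin 3 → ZMod N, ∑ b : Fin 3 → ZMod N,
          u a * u b * ((2 : ℝ) ^ (-(∑ i : Fin 3, |((a - b) i).valMinAbs|)) *
            (if (Finset.univ.sup fun i : Fin 3 => ((a - b) i).valMinAbs.natAbs) ≤ 1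
              then 1 else 0))
        = ∑ a : Fin 3 → ZMod N, ∑ b : Fin 3 → ZMod N,
            u a * u b * ((1/8 : ℝ) * ∑ g : Fin 3 → ZMod N, P a g * P b g) := by
          refine Finset.sum_congr rfl fun a _ => Finset.sum_congr rfl fun b _ => ?_
          rw [hker, hprod]
      _ = ∑ a : Fin 3 → ZMod N, ∑ b : Fin 3 → ZMod N, ∑ g : Fin 3 → ZMod N,
            (1/8 : ℝ) * ((u a * P a g) * (u b * P b g)) := by
          refine Finset.sum_congr rfl fun a _ => Finset.sum_congr rfl fun b _ => ?_
          rw [Finset.mul_sum, Finset.mul_sum]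
          exact Finset.sum_congr rfl fun g _ => by ring
      _ = ∑ a : Fin 3 → ZMod N, ∑ g : Fin 3 → ZMod N, ∑ b : Fin 3 → ZMod N,
            (1/8 : ℝ) * ((u a * P a g) * (u b * P b g)) :=
          Finset.sum_congr rfl fun a _ => Finset.sum_comm
      _ = ∑ g : Fin 3 → ZMod N, ∑ a : Fin 3 → ZMod N, ∑ b : Fin 3 → ZMod N,
            (1/8 : ℝ) * ((u a * P a g) * (u b * P b g)) := Finset.sum_comm
      _ = ∑ g : Fin 3 → ZMod N, (1/8 : ℝ) * (V g)^2 := by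
          refine Finset.sum_congr rfl fun g _ => ?_
          have hVg : V g = ∑ a : Fin 3 → ZMod N, u a * P a g := rfl
          rw [hVg, pow_two, Finset.sum_mul_sum]
          simp only [Finset.mul_sum]
      _ = (1/8 : ℝ) * ∑ g : Fin 3 → ZMod N, (V g)^2 := (Finset.mul_sum _ _ _).symm
  -- m as a sum of two point indicators
  have msum : ∀ x : ZMod N,
      m x = ∑ j : Fin 2, (if x = ((j : ℕ) : ZMod N) then (1:ℝ) else 0) := by
    intro x
    rw [Fin.sum_univ_two]
    by_cases h0 : x = 0
    · subst h0
      simp [hm, Ne.symm h10]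
    · by_cases h1' : x = 1
      · subst h1'
        simp [hm, h10]
      · simp [hm, h0, h1']
  -- V as an eight-point sum
  have hV8 : ∀ g : Fin 3 → ZMod N,
      V g = ∑ ε : Fin 3 → Fin 2, u (g + fun i => ((ε i : ℕ) : ZMod N)) := by
    intro g
    have hVg : V g = ∑ a : Fin 3 → ZMod N, u a * P a g := rfl
    rw [hVg]
    have hPa : ∀ a : Fin 3 → ZMod N, P a g = ∑ ε : Fin 3 → Fin 2,
        (if a = g + (fun i => ((ε i : ℕ) : ZMod N)) then (1:ℝ) else 0) := by
      intro a
      have hPa0 : P a g = ∏ i : Fin 3, m (a i - g i) := rfl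
      rw [hPa0]
      calc ∏ i : Fin 3, m (a i - g i)
          = ∏ i : Fin 3, ∑ j : Fin 2,
              (if a i - g i = ((j : ℕ) : ZMod N) then (1:ℝ) else 0) :=
            Finset.prod_congr rfl fun i _ => msum _
        _ = ∑ ε : Fin 3 → Fin 2, ∏ i : Fin 3,
              (if a i - g i = ((ε i : ℕ) : ZMod N) then (1:ℝ) else 0) := by
            rw [Finset.prod_univ_sum, Fintype.piFinset_univ]
        _ = ∑ ε : Fin 3 → Fin 2,
              (if a = g + (fun i => ((ε i : ℕ) : ZMod N)) then (1:ℝ) else 0) := by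
            refine Finset.sum_congr rfl fun ε _ => ?_
            have hiffe : (∀ i : Fin 3, a i - g i = ((ε i : ℕ) : ZMod N))
                ↔ a = g + (fun i => ((ε i : ℕ) : ZMod N)) := by
              rw [funext_iff]
              refine forall_congr' fun i => ?_
              rw [sub_eq_iff_eq_add']
              exact Iff.rfl
            simp only [Fintype.prod_boole, hiffe]
    calc ∑ a : Fin 3 → ZMod N, u a * P a g
        = ∑ a : Fin 3 → ZMod N, ∑ ε : Fin 3 → Fin 2,
            u a * (if a = g + (fun i => ((ε i : ℕ) : ZMod N)) then (1:ℝ) else 0) := by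
          refine Finset.sum_congr rfl fun a _ => ?_
          rw [hPa a, Finset.mul_sum]
      _ = ∑ ε : Fin 3 → Fin 2, ∑ a : Fin 3 → ZMod N,
            u a * (if a = g + (fun i => ((ε i : ℕ) : ZMod N)) then (1:ℝ) else 0) :=
          Finset.sum_comm
      _ = ∑ ε : Fin 3 → Fin 2, u (g + fun i => ((ε i : ℕ) : ZMod N)) := by
          refine Finset.sum_congr rfl fun ε _ => ?_
          simp [mul_ite, mul_one, mul_zero, Finset.sum_ite_eq']
  -- expansion of a sum over `Fin 3 → Fin 2` into eight terms
  have hbij : Function.Bijective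
      (fun p : Fin 2 × Fin 2 × Fin 2 => (![p.1, p.2.1, p.2.2] : Fin 3 → Fin 2)) := by
    decide
  have hexp : ∀ F : (Fin 3 → Fin 2) → ℝ, ∑ ε : Fin 3 → Fin 2, F ε =
      F ![0,0,0] + F ![0,0,1] + F ![0,1,0] + F ![0,1,1]
        + F ![1,0,0] + F ![1,0,1] + F ![1,1,0] + F ![1,1,1] := by
    intro F
    rw [← Fintype.sum_bijective _ hbij _ F (fun p => rfl)]
    rw [Fintype.sum_prod_type]
    simp only [Fintype.sum_prod_type, Fin.sum_univ_two]
    ring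
  -- positivity
  have hVne : ∃ g0 : Fin 3 → ZMod N, V g0 ≠ 0 := by
    by_contra hcon
    push_neg at hcon
    apply hu
    set f2 : (Fin 3 → ZMod N) → ℝ :=
      fun g => u g + u (g + (![0,0,1] : Fin 3 → ZMod N)) with hf2
    set f1 : (Fin 3 → ZMod N) → ℝ :=
      fun g => f2 g + f2 (g + (![0,1,0] : Fin 3 → ZMod N)) with hf1
    have j000 : (fun i => ((((![0,0,0] : Fin 3 → Fin 2)) i : ℕ) : ZMod N))
        = (0 : Fin 3 → ZMod N) := by funext i; fin_cases i <;> simp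
    have j001 : (fun i => ((((![0,0,1] : Fin 3 → Fin 2)) i : ℕ) : ZMod N))
        = (![0,0,1] : Fin 3 → ZMod N) := by funext i; fin_cases i <;> simp
    have j010 : (fun i => ((((![0,1,0] : Fin 3 → Fin 2)) i : ℕ) : ZMod N))
        = (![0,1,0] : Fin 3 → ZMod N) := by funext i; fin_cases i <;> simp
    have j011 : (fun i => ((((![0,1,1] : Fin 3 → Fin 2)) i : ℕ) : ZMod N))
        = (![0,1,0] : Fin 3 → ZMod N) + ![0,0,1] := by funext i; fin_cases i <;> simp
    have j100 : (fun i => ((((![1,0,0] : Fin 3 → Fin 2)) i : ℕ) : ZMod N))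
        = (![1,0,0] : Fin 3 → ZMod N) := by funext i; fin_cases i <;> simp
    have j101 : (fun i => ((((![1,0,1] : Fin 3 → Fin 2)) i : ℕ) : ZMod N))
        = (![1,0,0] : Fin 3 → ZMod N) + ![0,0,1] := by funext i; fin_cases i <;> simp
    have j110 : (fun i => ((((![1,1,0] : Fin 3 → Fin 2)) i : ℕ) : ZMod N))
        = (![1,0,0] : Fin 3 → ZMod N) + ![0,1,0] := by funext i; fin_cases i <;> simp
    have j111 : (fun i => ((((![1,1,1] : Fin 3 → Fin 2)) i : ℕ) : ZMod N))
        = (![1,0,0] : Fin 3 → ZMod N) + ![0,1,0] + ![0,0,1] := by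
      funext i; fin_cases i <;> simp
    have hstep0 : ∀ g, f1 g + f1 (g + (![1,0,0] : Fin 3 → ZMod N)) = 0 := by
      intro g
      have h8 := hcon g
      rw [hV8 g, hexp] at h8
      rw [j000, j001, j010, j011, j100, j101, j110, j111, add_zero] at h8
      simp only [hf1, hf2]
      simp only [← add_assoc] at h8 ⊢
      linarith [h8]
    have hz1 : ∀ g, f1 g = 0 := aux_shiftInj hNodd _ f1 hstep0
    have hstep1 : ∀ g, f2 g + f2 (g + (![0,1,0] : Fin 3 → ZMod N)) = 0 := by
      intro g
      have := hz1 g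
      rwa [hf1] at this
    have hz2 : ∀ g, f2 g = 0 := aux_shiftInj hNodd _ f2 hstep1
    have hstep2 : ∀ g, u g + u (g + (![0,0,1] : Fin 3 → ZMod N)) = 0 := by
      intro g
      have := hz2 g
      rwa [hf2] at this
    have hz3 := aux_shiftInj hNodd _ u hstep2
    funext g
    exact hz3 g
  obtain ⟨g0, hg0⟩ := hVne
  rw [hQsq]
  apply mul_pos (by norm_num : (0:ℝ) < 1/8)
  refine Finset.sum_pos' (fun i _ => sq_nonneg _) ⟨g0, Finset.mem_univ _, ?_⟩
  positivity
end

section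
/- Let N ≥ 5 be an integer, let λ, μ ∈ ℂ with λ^N = μ^N = 1, and let ν be a nonzero real number satisfying λ² + λ^{−2} + μ² + μ^{−2} + ν² + ν^{−2} = 6. Define p : (ℤ/N)³ → ℂ by p(a) = λ^{a₁} μ^{a₂} ν^{ā₃}, where ā₃ ∈ {0, 1, …, N−1} is the representative of the third coordinate a₃. Then the discrete Laplacian (Δp)(a) = Σ_{i=1}^{3} (p(a+2eᵢ) + p(a−2eᵢ)) − 6p(a) satisfies: (Δp)(a) = λ^{a₁} μ^{a₂} ν^{ā₃} (ν^{N−2} − ν^{−2}) if ā₃ ∈ {0, 1}; (Δp)(a) = λ^{a₁} μ^{a₂} ν^{ā₃} (ν^{2−N} − ν²) if ā₃ ∈ {N−2, N−1}; and (Δp)(a) = 0 otherwise. -/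
/-- The discrete Laplacian with shifts by `2` on functions on the periodic lattice
`(ℤ/N)³`: `(Δp)(a) = Σ_{i=1}^{3} (p(a + 2eᵢ) + p(a - 2eᵢ)) - 6 p(a)`. -/
def discLap {R : Type*} [Ring R] (N : ℕ) (p : (Fin 3 → ZMod N) → R)
    (a : Fin 3 → ZMod N) : R :=
  (∑ i : Fin 3, (p (a + Pi.single i (2 : ZMod N)) + p (a - Pi.single i (2 : ZMod N)))) -
    6 * p a

lemma auxShift {N : ℕ} [NeZero N] (z : ℂ) (hz : z ≠ 0) (h1 : z ^ N = 1)
    (x : ZMod N) (c : ℤ) :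
    z ^ ((x + (c : ZMod N)).val) = z ^ x.val * z ^ c := by
  rw [← zpow_natCast z ((x + (c : ZMod N)).val), ← zpow_natCast z x.val, ← zpow_add₀ hz]
  obtain ⟨k, hk⟩ : (N:ℤ) ∣ (((x + (c : ZMod N)).val : ℤ) - ((x.val : ℤ) + c)) := by
    rw [← ZMod.intCast_zmod_eq_zero_iff_dvd]
    push_cast [ZMod.natCast_val]
    ring
  have hm : ((x + (c : ZMod N)).val : ℤ) = ((x.val : ℤ) + c) + N * k := by linarith
  rw [hm, zpow_add₀ hz, zpow_mul, zpow_natCast, h1, one_zpow, mul_one]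

lemma auxNu (ν : ℂ) (hz : ν ≠ 0) (m v : ℕ) (k : ℤ) (h : (m : ℤ) = (v : ℤ) + k) :
    ν ^ m = ν ^ v * ν ^ k := by
  rw [← zpow_natCast ν m, h, zpow_add₀ hz, zpow_natCast]

/-- Let `N ≥ 5`, `λ^N = μ^N = 1` in `ℂ`, and let `ν ≠ 0` be real with
`λ² + λ⁻² + μ² + μ⁻² + ν² + ν⁻² = 6`.  For `p(a) = λ^{a₁} μ^{a₂} ν^{ā₃}` (where
`ā₃ ∈ {0,…,N-1}` represents `a₃`), the discrete Laplacian of `p` is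
`λ^{a₁} μ^{a₂} ν^{ā₃} (ν^{N-2} - ν^{-2})` for `ā₃ ∈ {0,1}`,
`λ^{a₁} μ^{a₂} ν^{ā₃} (ν^{2-N} - ν²)` for `ā₃ ∈ {N-2, N-1}`, and `0` otherwise. -/
theorem discLap_truncated_harmonic
    (N : ℕ) (hN : 5 ≤ N)
    (lam mu : ℂ) (hlam : lam ^ N = 1) (hmu : mu ^ N = 1)
    (ν : ℝ) (hν : ν ≠ 0)
    (heq : lam ^ (2 : ℤ) + lam ^ (-2 : ℤ) + mu ^ (2 : ℤ) + mu ^ (-2 : ℤ) +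
      (ν : ℂ) ^ (2 : ℤ) + (ν : ℂ) ^ (-2 : ℤ) = 6)
    (p : (Fin 3 → ZMod N) → ℂ)
    (hp : ∀ a : Fin 3 → ZMod N,
      p a = lam ^ (a 0).val * mu ^ (a 1).val * (ν : ℂ) ^ (a 2).val) :
    ∀ a : Fin 3 → ZMod N,
      discLap N p a =
        if (a 2).val = 0 ∨ (a 2).val = 1 then
          lam ^ (a 0).val * mu ^ (a 1).val * (ν : ℂ) ^ (a 2).val *
            ((ν : ℂ) ^ ((N : ℤ) - 2) - (ν : ℂ) ^ (-2 : ℤ))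
        else if (a 2).val = N - 2 ∨ (a 2).val = N - 1 then
          lam ^ (a 0).val * mu ^ (a 1).val * (ν : ℂ) ^ (a 2).val *
            ((ν : ℂ) ^ (2 - (N : ℤ)) - (ν : ℂ) ^ (2 : ℤ))
        else 0 := by
  intro a
  haveI : NeZero N := ⟨by omega⟩
  have hlam0 : lam ≠ 0 := by
    intro h; rw [h, zero_pow (by omega : N ≠ 0)] at hlam; exact one_ne_zero hlam.symm
  have hmu0 : mu ≠ 0 := by
    intro h; rw [h, zero_pow (by omega : N ≠ 0)] at hmu; exact one_ne_zero hmu.symm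
  have hν0 : (ν : ℂ) ≠ 0 := by exact_mod_cast hν
  -- λ and μ shift facts
  have hL2 : lam ^ ((a 0 + 2).val) = lam ^ (a 0).val * lam ^ (2:ℤ) := by
    have := auxShift lam hlam0 hlam (a 0) 2; push_cast at this; exact this
  have hL2' : lam ^ ((a 0 - 2).val) = lam ^ (a 0).val * lam ^ (-2:ℤ) := by
    rw [sub_eq_add_neg, show (-2 : ZMod N) = ((-2 : ℤ) : ZMod N) by push_cast; ring]
    exact auxShift lam hlam0 hlam (a 0) (-2)
  have hM2 : mu ^ ((a 1 + 2).val) = mu ^ (a 1).val * mu ^ (2:ℤ) := by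
    have := auxShift mu hmu0 hmu (a 1) 2; push_cast at this; exact this
  have hM2' : mu ^ ((a 1 - 2).val) = mu ^ (a 1).val * mu ^ (-2:ℤ) := by
    rw [sub_eq_add_neg, show (-2 : ZMod N) = ((-2 : ℤ) : ZMod N) by push_cast; ring]
    exact auxShift mu hmu0 hmu (a 1) (-2)
  -- ν val facts
  have hv : (a 2).val < N := ZMod.val_lt _
  set v := (a 2).val with hvdef
  have h2v : ((2 : ZMod N)).val = 2 := by
    rw [show (2 : ZMod N) = ((2 : ℕ) : ZMod N) by norm_num, ZMod.val_natCast,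
      Nat.mod_eq_of_lt (by omega)]
  have hvp : (a 2 + 2).val = (v + 2) % N := by
    rw [ZMod.val_add, h2v]
  have hN2 : ((N - 2 : ℕ) : ZMod N).val = N - 2 := by
    rw [ZMod.val_natCast, Nat.mod_eq_of_lt (by omega)]
  have hsub : a 2 - 2 = a 2 + ((N - 2 : ℕ) : ZMod N) := by
    have h1 : ((N - 2 : ℕ) : ZMod N) = -2 := by
      have h0 : ((N : ℕ) : ZMod N) = 0 := ZMod.natCast_self N
      push_cast [Nat.cast_sub (show 2 ≤ N by omega)]
      rw [h0]; ring
    rw [h1]; ring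
  have hvm : (a 2 - 2).val = (v + (N - 2)) % N := by
    rw [hsub, ZMod.val_add, hN2]
  have hmodlt : ∀ m : ℕ, m < N → m % N = m := fun m hm => Nat.mod_eq_of_lt hm
  have hmodge : ∀ m : ℕ, N ≤ m → m < 2 * N → m % N = m - N := fun m h1 h2 => by
    rw [Nat.mod_eq_sub_mod h1, Nat.mod_eq_of_lt (by omega)]
  rcases (by omega : v ≤ 1 ∨ N - 2 ≤ v ∨ (2 ≤ v ∧ v ≤ N - 3)) with h | h | h
  · rw [if_pos (by omega)]
    have e1 : (ν:ℂ) ^ ((a 2 + 2).val) = (ν:ℂ) ^ v * (ν:ℂ) ^ (2:ℤ) := by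
      rw [hvp, hmodlt _ (by omega)]
      exact auxNu _ hν0 _ _ _ (by push_cast; ring)
    have e2 : (ν:ℂ) ^ ((a 2 - 2).val) = (ν:ℂ) ^ v * (ν:ℂ) ^ ((N:ℤ) - 2) := by
      rw [hvm, hmodlt _ (by omega)]
      exact auxNu _ hν0 _ _ _ (by push_cast [Nat.cast_sub (show 2 ≤ N by omega)]; ring)
    rw [discLap, Fin.sum_univ_three]
    simp only [hp, Pi.add_apply, Pi.sub_apply, Pi.single_apply]
    norm_num [Fin.ext_iff]
    rw [e1, e2, hL2, hL2', hM2, hM2']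
    rw [← hvdef, ← zpow_natCast (ν:ℂ) 2, ← zpow_neg]
    linear_combination (lam ^ (a 0).val * mu ^ (a 1).val * (ν : ℂ) ^ v) * heq
  · rw [if_neg (by omega), if_pos (by omega)]
    have e1 : (ν:ℂ) ^ ((a 2 + 2).val) = (ν:ℂ) ^ v * (ν:ℂ) ^ (2 - (N:ℤ)) := by
      rw [hvp, hmodge _ (by omega) (by omega)]
      exact auxNu _ hν0 _ _ _ (by push_cast [Nat.cast_sub (show N ≤ v + 2 by omega)]; ring)
    have e2 : (ν:ℂ) ^ ((a 2 - 2).val) = (ν:ℂ) ^ v * (ν:ℂ) ^ (-2:ℤ) := by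
      rw [hvm, hmodge _ (by omega) (by omega), show v + (N - 2) - N = v - 2 by omega]
      exact auxNu _ hν0 _ _ _ (by push_cast [Nat.cast_sub (show 2 ≤ v by omega)]; ring)
    rw [discLap, Fin.sum_univ_three]
    simp only [hp, Pi.add_apply, Pi.sub_apply, Pi.single_apply]
    norm_num [Fin.ext_iff]
    rw [e1, e2, hL2, hL2', hM2, hM2']
    rw [← hvdef, ← zpow_natCast (ν:ℂ) 2, Nat.cast_ofNat]
    linear_combination (lam ^ (a 0).val * mu ^ (a 1).val * (ν : ℂ) ^ v) * heq
  · rw [if_neg (by omega), if_neg (by omega)]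
    have e1 : (ν:ℂ) ^ ((a 2 + 2).val) = (ν:ℂ) ^ v * (ν:ℂ) ^ (2:ℤ) := by
      rw [hvp, hmodlt _ (by omega)]
      exact auxNu _ hν0 _ _ _ (by push_cast; ring)
    have e2 : (ν:ℂ) ^ ((a 2 - 2).val) = (ν:ℂ) ^ v * (ν:ℂ) ^ (-2:ℤ) := by
      rw [hvm, hmodge _ (by omega) (by omega), show v + (N - 2) - N = v - 2 by omega]
      exact auxNu _ hν0 _ _ _ (by push_cast [Nat.cast_sub (show 2 ≤ v by omega)]; ring)
    rw [discLap, Fin.sum_univ_three]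
    simp only [hp, Pi.add_apply, Pi.sub_apply, Pi.single_apply]
    norm_num [Fin.ext_iff]
    rw [e1, e2, hL2, hL2', hM2, hM2']
    linear_combination (lam ^ (a 0).val * mu ^ (a 1).val * (ν : ℂ) ^ v) * heq
end

section
/- Let N ≥ 5 be an odd integer. For integers l, m define ν_{l,m} = √(1 − (1/2)cos(4πl/N) − (1/2)cos(4πm/N)) + √(2 − (1/2)cos(4πl/N) − (1/2)cos(4πm/N)). Define p : (ℤ/N)³ → ℝ by p(a) = (1/(4N²)) Σ_{l=1}^{N−1} Σ_{m=0}^{N−1} tan(πl/N) · sin(2π(l a₁ + m a₂)/N) · (1/(ν² − ν^{−2})) · ( (ν^{ā₃} + ν^{N−ā₃})/(1 − ν^N) + ((−ν)^{ā₃} + (−ν)^{N−ā₃})/(1 + ν^N) ), where ν = ν_{l,m} and ā₃ ∈ {0,…,N−1} is the representative of a₃. Then p solves the Poisson problem: for all a ∈ (ℤ/N)³, (Δp)(a) = (1/2)(−1)^{ā₁−1} if ā₁ ≠ 0, ā₂ = 0 and ā₃ = 0, and (Δp)(a) = 0 otherwise, where āᵢ ∈ {0,…,N−1} denote the representatives of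 the coordinates of a. -/
open Real

/-- `ν_{l,m} = √(1 - cos(4πl/N)/2 - cos(4πm/N)/2) + √(2 - cos(4πl/N)/2 - cos(4πm/N)/2)`. -/
noncomputable def nuLM (N l m : ℕ) : ℝ :=
  Real.sqrt (1 - (1 / 2) * Real.cos (4 * Real.pi * l / N) -
      (1 / 2) * Real.cos (4 * Real.pi * m / N)) +
    Real.sqrt (2 - (1 / 2) * Real.cos (4 * Real.pi * l / N) -
      (1 / 2) * Real.cos (4 * Real.pi * m / N))


lemma sin_cong (N : ℕ) (t s : ℤ) (h : (N:ℤ) ∣ (t - s)) :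
    Real.sin (2 * π * t / N) = Real.sin (2 * π * s / N) := by
  obtain ⟨q, hq⟩ := h
  have ht : (t : ℝ) = s + N * q := by
    have : (t : ℝ) - s = N * q := by exact_mod_cast congrArg (Int.cast : ℤ → ℝ) hq
    linarith
  rcases eq_or_ne (N : ℝ) 0 with h0 | h0
  · simp [h0]
  · rw [ht]
    have : 2 * π * ((s : ℝ) + N * q) / N = 2 * π * s / N + q * (2 * π) := by
      field_simp
    rw [this, Real.sin_add_int_mul_two_pi]

lemma mod_dvd (N : ℤ) (x : ℤ) : N ∣ (x % N - x) := ⟨-(x / N), by rw [Int.emod_def]; ring⟩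

lemma sin_shift_p (N l x m u : ℕ) (hN : 2 ≤ N) :
    Real.sin (2 * π * ((l:ℝ) * (((x+2) % N : ℕ):ℝ) + (m:ℝ) * (u:ℝ)) / N)
      = Real.sin (2 * π * ((l:ℝ) * x + (m:ℝ) * u) / N + 4 * π * l / N) := by
  have hN0 : (N:ℝ) ≠ 0 := by positivity
  have h1 : ((l:ℝ) * (((x+2) % N : ℕ):ℝ) + (m:ℝ) * (u:ℝ))
      = ((((l * ((x+2) % N) + m * u : ℕ) : ℤ)):ℝ) := by push_cast; norm_cast
  rw [h1, sin_cong N _ ((l:ℤ) * x + m * u + 2 * l)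
    (by
      have : (((l * ((x+2) % N) + m * u : ℕ) : ℤ)) - ((l:ℤ) * x + m * u + 2 * l)
          = l * (((x:ℤ)+2) % N - ((x:ℤ)+2)) := by push_cast; ring
      rw [this]; exact Dvd.dvd.mul_left (mod_dvd N _) l)]
  congr 1
  push_cast
  field_simp
  ring

lemma sin_shift_m (N l x m u : ℕ) (hN : 2 ≤ N) :
    Real.sin (2 * π * ((l:ℝ) * (((x+(N-2)) % N : ℕ):ℝ) + (m:ℝ) * (u:ℝ)) / N)
      = Real.sin (2 * π * ((l:ℝ) * x + (m:ℝ) * u) / N - 4 * π * l / N) := by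
  have hN0 : (N:ℝ) ≠ 0 := by positivity
  have h1 : ((l:ℝ) * (((x+(N-2)) % N : ℕ):ℝ) + (m:ℝ) * (u:ℝ))
      = ((((l * ((x+(N-2)) % N) + m * u : ℕ) : ℤ)):ℝ) := by push_cast; norm_cast
  rw [h1, sin_cong N _ ((l:ℤ) * x + m * u - 2 * l)
    (by
      have : (((l * ((x+(N-2)) % N) + m * u : ℕ) : ℤ)) - ((l:ℤ) * x + m * u - 2 * l)
          = l * (((x:ℤ) + N - 2) % N - ((x:ℤ) + N - 2)) + N * l := by
        push_cast [Nat.cast_sub hN]; ring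
      rw [this]
      exact dvd_add (Dvd.dvd.mul_left (mod_dvd N _) l) ⟨l, rfl⟩)]
  congr 1
  push_cast
  field_simp
  ring

lemma sin_pm (X D : ℝ) : Real.sin (X + D) + Real.sin (X - D) = 2 * Real.cos D * Real.sin X := by
  rw [Real.sin_add, Real.sin_sub]; ring



lemma sin_shift_p2 (N l x m u : ℕ) (hN : 2 ≤ N) :
    Real.sin (2 * π * ((l:ℝ) * (x:ℝ) + (m:ℝ) * (((u+2) % N : ℕ):ℝ)) / N)
      = Real.sin (2 * π * ((l:ℝ) * x + (m:ℝ) * u) / N + 4 * π * m / N) := by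
  have hN0 : (N:ℝ) ≠ 0 := by positivity
  have h1 : ((l:ℝ) * (x:ℝ) + (m:ℝ) * (((u+2) % N : ℕ):ℝ))
      = ((((l * x + m * ((u+2) % N) : ℕ) : ℤ)):ℝ) := by push_cast; norm_cast
  rw [h1, sin_cong N _ ((l:ℤ) * x + m * u + 2 * m)
    (by
      have : (((l * x + m * ((u+2) % N) : ℕ) : ℤ)) - ((l:ℤ) * x + m * u + 2 * m)
          = m * (((u:ℤ)+2) % N - ((u:ℤ)+2)) := by push_cast; ring
      rw [this]; exact Dvd.dvd.mul_left (mod_dvd N _) m)]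
  congr 1
  push_cast
  field_simp
  ring

lemma sin_shift_m2 (N l x m u : ℕ) (hN : 2 ≤ N) :
    Real.sin (2 * π * ((l:ℝ) * (x:ℝ) + (m:ℝ) * (((u+(N-2)) % N : ℕ):ℝ)) / N)
      = Real.sin (2 * π * ((l:ℝ) * x + (m:ℝ) * u) / N - 4 * π * m / N) := by
  have hN0 : (N:ℝ) ≠ 0 := by positivity
  have h1 : ((l:ℝ) * (x:ℝ) + (m:ℝ) * (((u+(N-2)) % N : ℕ):ℝ))
      = ((((l * x + m * ((u+(N-2)) % N) : ℕ) : ℤ)):ℝ) := by push_cast; norm_cast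
  rw [h1, sin_cong N _ ((l:ℤ) * x + m * u - 2 * m)
    (by
      have : (((l * x + m * ((u+(N-2)) % N) : ℕ) : ℤ)) - ((l:ℤ) * x + m * u - 2 * m)
          = m * (((u:ℤ) + N - 2) % N - ((u:ℤ) + N - 2)) + N * m := by
        push_cast [Nat.cast_sub hN]; ring
      rw [this]
      exact dvd_add (Dvd.dvd.mul_left (mod_dvd N _) m) ⟨m, rfl⟩)]
  congr 1
  push_cast
  field_simp
  ring

lemma cos_lt_one' (N l : ℕ) (hN : 5 ≤ N) (hNodd : Odd N) (hl1 : 1 ≤ l) (hl2 : l ≤ N - 1) :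
    Real.cos (4 * π * l / N) < 1 := by
  rcases lt_or_eq_of_le (Real.cos_le_one (4 * π * l / N)) with h | h
  · exact h
  · exfalso
    rw [Real.cos_eq_one_iff] at h
    obtain ⟨n, hn⟩ := h
    have hN0 : (N:ℝ) ≠ 0 := by positivity
    have hpi : (0:ℝ) < π := Real.pi_pos
    have h2 : (n : ℝ) * N = 2 * l := by
      field_simp at hn
      nlinarith [hn]
    have h3 : n * N = 2 * l := by exact_mod_cast h2
    have hdvd : (N:ℤ) ∣ (l * 2 : ℕ) := Dvd.intro n (by push_cast; linarith [h3])
    have hdvdN : N ∣ l * 2 := by exact_mod_cast hdvd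
    have hnd : ¬ (2 ∣ N) := by
      rcases hNodd with ⟨k, hk⟩; omega
    have hcop : Nat.Coprime N 2 := (Nat.coprime_comm.mp ((Nat.prime_two.coprime_iff_not_dvd).mpr hnd))
    have : (N:ℕ) ∣ l := Nat.Coprime.dvd_of_dvd_mul_right hcop hdvdN
    have := Nat.le_of_dvd (by omega) this
    omega

lemma nu_facts (N l m : ℕ) (hN : 5 ≤ N) (hNodd : Odd N) (hl1 : 1 ≤ l) (hl2 : l ≤ N - 1) :
    1 < nuLM N l m ∧
      nuLM N l m ^ 2 + (nuLM N l m ^ 2)⁻¹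
        = 6 - 2 * Real.cos (4 * π * l / N) - 2 * Real.cos (4 * π * m / N) := by
  set c1 := Real.cos (4 * π * l / N) with hc1def
  set c2 := Real.cos (4 * π * m / N) with hc2def
  have hc1 : c1 < 1 := cos_lt_one' N l hN hNodd hl1 hl2
  have hc2 : c2 ≤ 1 := Real.cos_le_one _
  set A := 1 - (1/2) * c1 - (1/2) * c2 with hA
  have hApos : 0 < A := by rw [hA]; nlinarith
  have hA1 : (2:ℝ) - (1/2) * c1 - (1/2) * c2 = A + 1 := by rw [hA]; ring
  have hnu : nuLM N l m = Real.sqrt A + Real.sqrt (A + 1) := by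
    rw [nuLM, hA1]
  set s := Real.sqrt A with hs
  set t := Real.sqrt (A+1) with ht
  have hs2 : s^2 = A := Real.sq_sqrt hApos.le
  have ht2 : t^2 = A + 1 := Real.sq_sqrt (by linarith)
  have hspos : 0 < s := Real.sqrt_pos.mpr hApos
  have ht1 : 1 ≤ t := by
    rw [ht]
    nlinarith [Real.sq_sqrt (show (0:ℝ) ≤ A + 1 by linarith), Real.sqrt_nonneg (A+1)]
  have hgt : 1 < nuLM N l m := by rw [hnu]; nlinarith
  refine ⟨hgt, ?_⟩
  have hne : nuLM N l m ≠ 0 := by linarith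
  have hprod : (t - s) * (s + t) = 1 := by nlinarith
  have hinv : (t - s)^2 = (nuLM N l m ^ 2)⁻¹ := by
    refine eq_inv_of_mul_eq_one_left ?_
    rw [hnu, ← mul_pow, hprod, one_pow]
  rw [← hinv, hnu]
  linear_combination 2*hs2 + 2*ht2 + 4*hA

noncomputable def gg (ν : ℝ) (N k : ℕ) : ℝ :=
  (ν^k + ν^(N-k))/(1-ν^N) + ((-ν)^k + (-ν)^(N-k))/(1+ν^N)

lemma g_rec (N : ℕ) (hN : 5 ≤ N) (hNodd : Odd N) (ν : ℝ) (hν : 1 < ν) (k : ℕ) (hk : k < N) :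
    gg ν N ((k+2) % N) + gg ν N ((k+(N-2)) % N)
      = (ν^2 + (ν^2)⁻¹) * gg ν N k + (if k = 0 then 2*(ν^2 - (ν^2)⁻¹) else 0) := by
  have hν0 : (0:ℝ) < ν := lt_trans one_pos hν
  have hν0' : ν ≠ 0 := ne_of_gt hν0
  have hXgt : 1 < ν^N := one_lt_pow₀ hν (by omega)
  have hXpos : (0:ℝ) < ν^N := pow_pos hν0 N
  have hne1 : 1 - ν^N ≠ 0 := ne_of_lt (by linarith)
  have hne2 : 1 + ν^N ≠ 0 := by linarith
  obtain ⟨d, hd⟩ : ∃ d, N = 2*d+5 := by obtain ⟨w, hw⟩ := hNodd; exact ⟨w-2, by omega⟩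
  have hsq : ν^2 ≠ 0 := pow_ne_zero 2 hν0'
  rcases Nat.lt_or_ge k 2 with hk2 | hk2
  · interval_cases k
    · -- k = 0
      have e1 : (0+2) % N = 2 := Nat.mod_eq_of_lt (by omega)
      have e2 : (0+(N-2)) % N = N-2 := by
        rw [Nat.zero_add]; exact Nat.mod_eq_of_lt (by omega)
      rw [e1, e2]
      simp only [gg, if_pos rfl, ↓reduceIte]
      rw [hd] at hne1 hne2 ⊢
      rw [show 2*d+5-2 = 2*d+3 from by omega,
          show 2*d+5-(2*d+3) = 2 from by omega,
          show 2*d+5-0 = 2*d+5 from by omega]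
      simp only [pow_add, pow_mul, neg_sq, pow_zero] at hne1 hne2 ⊢
      rw [mul_comm] at hne1 hne2
      field_simp
      ring
    · -- k = 1
      have e1 : (1+2) % N = 3 := Nat.mod_eq_of_lt (by omega)
      have e2 : (1+(N-2)) % N = N-1 := by
        rw [show 1+(N-2) = N-1 from by omega]; exact Nat.mod_eq_of_lt (by omega)
      rw [e1, e2]
      simp only [gg, if_neg (by omega : ¬ (1:ℕ) = 0)]
      rw [hd] at hne1 hne2 ⊢
      rw [show 2*d+5-3 = 2*d+2 from by omega,
          show 2*d+5-1 = 2*d+4 from by omega,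
          show 2*d+5-(2*d+4) = 1 from by omega]
      simp only [pow_add, pow_mul, neg_sq, pow_zero] at hne1 hne2 ⊢
      rw [mul_comm] at hne1 hne2
      field_simp
      ring
  · rcases Nat.lt_or_ge k (N-2) with hk3 | hk3
    · -- generic 2 ≤ k ≤ N-3
      have e1 : (k+2) % N = k+2 := Nat.mod_eq_of_lt (by omega)
      have e2 : (k+(N-2)) % N = k-2 := by
        rw [show k+(N-2) = (k-2) + N from by omega, Nat.add_mod_right]
        exact Nat.mod_eq_of_lt (by omega)
      rw [e1, e2]
      simp only [gg, if_neg (by omega : ¬ k = 0)]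
      set i := N-k-2 with hi
      set j := k-2 with hj
      rw [show k+2 = j+4 from by omega,
          show N-(j+4) = i from by omega,
          show N-j = i+4 from by omega,
          show k = j+2 from by omega,
          show N-(j+2) = i+2 from by omega]
      rw [show N = i+j+4 from by omega] at hne1 hne2 ⊢
      simp only [pow_add, pow_mul, neg_sq, pow_zero] at hne1 hne2 ⊢
      field_simp
      ring
    · -- k = N-2 or k = N-1
      have : k = N-2 ∨ k = N-1 := by omega
      rcases this with h | h <;> subst h
      · have e1 : (N-2+2) % N = 0 := by
          rw [show N-2+2 = N from by omega]; exact Nat.mod_self N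
        have e2 : (N-2+(N-2)) % N = N-4 := by
          rw [show N-2+(N-2) = (N-4) + N from by omega, Nat.add_mod_right]
          exact Nat.mod_eq_of_lt (by omega)
        rw [e1, e2]
        simp only [gg, if_neg (by omega : ¬ N-2 = 0)]
        rw [hd] at hne1 hne2 ⊢
        rw [show 2*d+5-0 = 2*d+5 from by omega,
            show 2*d+5-4 = 2*d+1 from by omega,
            show 2*d+5-(2*d+1) = 4 from by omega,
            show 2*d+5-2 = 2*d+3 from by omega,
            show 2*d+5-(2*d+3) = 2 from by omega]
        simp only [pow_add, pow_mul, neg_sq, pow_zero] at hne1 hne2 ⊢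
        field_simp
        ring
      · have e1 : (N-1+2) % N = 1 := by
          rw [show N-1+2 = 1 + N from by omega, Nat.add_mod_right]
          exact Nat.mod_eq_of_lt (by omega)
        have e2 : (N-1+(N-2)) % N = N-3 := by
          rw [show N-1+(N-2) = (N-3) + N from by omega, Nat.add_mod_right]
          exact Nat.mod_eq_of_lt (by omega)
        rw [e1, e2]
        simp only [gg, if_neg (by omega : ¬ N-1 = 0)]
        rw [hd] at hne1 hne2 ⊢
        rw [show 2*d+5-1 = 2*d+4 from by omega,
            show 2*d+5-(2*d+4) = 1 from by omega,
            show 2*d+5-3 = 2*d+2 from by omega,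
            show 2*d+5-(2*d+2) = 3 from by omega]
        simp only [pow_add, pow_mul, neg_sq, pow_zero] at hne1 hne2 ⊢
        rw [mul_comm] at hne1 hne2
        field_simp
        ring

noncomputable def om (N : ℕ) : ℂ := Complex.exp (2*Real.pi*Complex.I/N)

lemma om_pow_N (N : ℕ) (hN : 0 < N) : om N ^ N = 1 := by
  rw [om, ← Complex.exp_nat_mul]
  have hN0 : (N:ℂ) ≠ 0 := Nat.cast_ne_zero.mpr (by omega)
  rw [show (N:ℂ) * (2*Real.pi*Complex.I/N) = 2*Real.pi*Complex.I from by
    field_simp]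
  exact Complex.exp_two_pi_mul_I

lemma om_pow_eq_one_iff (N : ℕ) (hN : 0 < N) (k : ℕ) : om N ^ k = 1 ↔ N ∣ k := by
  constructor
  · intro h
    rw [om, ← Complex.exp_nat_mul, Complex.exp_eq_one_iff] at h
    obtain ⟨n, hn⟩ := h
    have hN0 : (N:ℂ) ≠ 0 := by exact_mod_cast Nat.cast_ne_zero.mpr (by omega)
    have hpi : (Real.pi:ℂ) ≠ 0 := by
      exact_mod_cast Complex.ofReal_ne_zero.mpr (ne_of_gt Real.pi_pos)
    have hI : Complex.I ≠ 0 := Complex.I_ne_zero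
    have h2 : (k:ℂ) * (2*Real.pi*Complex.I) = (n * N : ℂ) * (2*Real.pi*Complex.I) := by
      field_simp at hn
      ring_nf at hn ⊢
      linear_combination (2*Real.pi*Complex.I) * hn
    have h3 : (k:ℂ) = ((n * N : ℤ):ℂ) := by
      have := mul_right_cancel₀ (by simp [hpi, hI, Real.pi_ne_zero] : (2*(Real.pi:ℂ)*Complex.I) ≠ 0) h2
      push_cast
      convert this using 1
    have h4 : (k:ℤ) = n * N := by exact_mod_cast h3
    have h5 : (N:ℤ) ∣ (k:ℤ) := ⟨n, by linarith⟩
    exact_mod_cast h5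
  · rintro ⟨c, rfl⟩
    rw [pow_mul, om_pow_N N hN, one_pow]

lemma om_pow_ne_neg_one (N : ℕ) (hN : 0 < N) (hNodd : Odd N) (l : ℕ) :
    om N ^ l + 1 ≠ 0 := by
  intro h
  have hl : om N ^ l = -1 := by linear_combination h
  have h2 : om N ^ (2*l) = 1 := by rw [two_mul, pow_add, hl]; ring
  have hdvd : N ∣ 2*l := (om_pow_eq_one_iff N hN _).mp h2
  have hnd : ¬ (2 ∣ N) := by rcases hNodd with ⟨k, hk⟩; omega
  have hcop : Nat.Coprime N 2 :=
    Nat.coprime_comm.mp ((Nat.prime_two.coprime_iff_not_dvd).mpr hnd)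
  have : N ∣ l := hcop.dvd_of_dvd_mul_left hdvd
  have : om N ^ l = 1 := (om_pow_eq_one_iff N hN l).mpr this
  rw [this] at hl
  norm_num at hl

-- E lemma
lemma om_geom (N : ℕ) (hN : 0 < N) (s : ℕ) :
    ∑ l ∈ Finset.range N, (om N ^ s) ^ l = if N ∣ s then (N:ℂ) else 0 := by
  by_cases h : N ∣ s
  · rw [if_pos h, (om_pow_eq_one_iff N hN s).mpr h]
    simp
  · rw [if_neg h, geom_sum_eq (fun hc => h ((om_pow_eq_one_iff N hN s).mp hc))]
    rw [← pow_mul, mul_comm s N, pow_mul, om_pow_N N hN, one_pow]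
    simp

-- sum over m of sin with nonzero frequency u
lemma sum_sin_zero (N : ℕ) (hN : 0 < N) (u : ℕ) (hu : u < N) (hu0 : u ≠ 0) (θ : ℝ) :
    ∑ m ∈ Finset.range N, Real.sin (θ + 2*π*u/N*m) = 0 := by
  have hz1 : om N ^ u ≠ 1 := fun hc =>
    hu0 (Nat.eq_zero_of_dvd_of_lt ((om_pow_eq_one_iff N hN u).mp hc) hu)
  have hterm : ∀ m : ℕ, Real.sin (θ + 2*π*u/N*m)
      = (Complex.exp ((θ:ℂ)*Complex.I) * (om N ^ u) ^ m).im := by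
    intro m
    have h1 : om N ^ u = Complex.exp (((2*π*u/N : ℝ):ℂ) * Complex.I) := by
      rw [om, ← Complex.exp_nat_mul]
      congr 1
      push_cast
      ring
    rw [h1, ← Complex.exp_nat_mul, ← Complex.exp_add]
    rw [show (θ:ℂ)*Complex.I + (m:ℕ) * (((2*π*u/N : ℝ):ℂ) * Complex.I)
        = ((θ + 2*π*u/N*m : ℝ):ℂ) * Complex.I from by push_cast; ring]
    rw [Complex.exp_ofReal_mul_I_im]
  calc ∑ m ∈ Finset.range N, Real.sin (θ + 2*π*u/N*m)
      = ∑ m ∈ Finset.range N, (Complex.exp ((θ:ℂ)*Complex.I) * (om N ^ u) ^ m).im := by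
        exact Finset.sum_congr rfl (fun m _ => hterm m)
    _ = (∑ m ∈ Finset.range N, Complex.exp ((θ:ℂ)*Complex.I) * (om N ^ u) ^ m).im := by
        rw [Complex.im_sum]
    _ = 0 := by
        rw [← Finset.mul_sum, geom_sum_eq hz1]
        rw [← pow_mul, mul_comm u N, pow_mul, om_pow_N N hN, one_pow]
        simp



lemma sum_neg_one_pow_ite (N c r₀ : ℕ) (hN : 0 < N) (hr₀ : r₀ < N) (hdvd : N ∣ (c + r₀)) :
    ∑ r ∈ Finset.range N, (-1:ℂ)^r * (if N ∣ (c + r) then (N:ℂ) else 0) = (-1:ℂ)^r₀ * N := by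
  rw [Finset.sum_eq_single r₀]
  · rw [if_pos hdvd]
  · intro r hr hne
    rw [if_neg, mul_zero]
    intro hd
    apply hne
    rcases Nat.le_total r r₀ with h | h
    · have h1 : N ∣ (c + r₀) - (c + r) := Nat.dvd_sub hdvd hd
      have h2 : (c + r₀) - (c + r) = r₀ - r := by omega
      rw [h2] at h1
      have := Nat.eq_zero_of_dvd_of_lt h1
      omega
    · have h1 : N ∣ (c + r) - (c + r₀) := Nat.dvd_sub hd hdvd
      have h2 : (c + r) - (c + r₀) = r - r₀ := by omega
      rw [h2] at h1
      have := Nat.eq_zero_of_dvd_of_lt h1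
      have hrN := Finset.mem_range.mp hr
      omega
  · intro h; exact absurd (Finset.mem_range.mpr hr₀) h

lemma om_mul_pow (N a l r : ℕ) : om N ^ (l*a) * (om N ^ l) ^ r = (om N ^ (a+r)) ^ l := by
  rw [← pow_mul, ← pow_add, ← pow_mul]
  congr 1
  ring

lemma tan_sum (N : ℕ) (hN : 5 ≤ N) (hNodd : Odd N) (j : ℕ) (hj1 : 1 ≤ j) (hj2 : j ≤ N-1) :
    ∑ l ∈ Finset.range N, Real.tan (π*l/N) * Real.sin (2*π*((l:ℝ)*j)/N)
      = N * (-1:ℝ)^(j-1) := by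
  have hN0 : 0 < N := by omega
  have hNC : (N:ℂ) ≠ 0 := Nat.cast_ne_zero.mpr (by omega)
  -- work in ℂ
  have key : ((∑ l ∈ Finset.range N, Real.tan (π*l/N) * Real.sin (2*π*((l:ℝ)*j)/N) : ℝ) : ℂ)
      = ((N * (-1:ℝ)^(j-1) : ℝ) : ℂ) := by
    rw [Complex.ofReal_sum]
    rw [Finset.sum_congr rfl (fun l _ => by
      rw [Complex.ofReal_mul, Complex.ofReal_tan, Complex.ofReal_sin] :
      ∀ l ∈ Finset.range N, ((Real.tan (π*l/N) * Real.sin (2*π*((l:ℝ)*j)/N) : ℝ) : ℂ)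
        = Complex.tan ((π*l/N : ℝ):ℂ) * Complex.sin ((2*π*((l:ℝ)*j)/N : ℝ):ℂ))]
    -- per-l rewrite
    have per_l : ∀ l ∈ Finset.range N,
        Complex.tan ((π*l/N : ℝ):ℂ) * Complex.sin ((2*π*((l:ℝ)*j)/N : ℝ):ℂ)
          = ∑ r ∈ Finset.range N, (-(1/4) * (-1:ℂ)^r) *
              ((om N ^ ((N-j)+r))^l - (om N ^ (j+r))^l
                - (om N ^ ((N-j+1)+r))^l + (om N ^ ((j+1)+r))^l) := by
      intro l _
      set E := Complex.exp (((π*l/N : ℝ):ℂ) * Complex.I) with hE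
      have hEne : E ≠ 0 := Complex.exp_ne_zero _
      have hE2 : E^2 = om N ^ l := by
        rw [hE, ← Complex.exp_nat_mul, om, ← Complex.exp_nat_mul]
        congr 1
        push_cast
        ring
      have hWne : E^2 + 1 ≠ 0 := by rw [hE2]; exact om_pow_ne_neg_one N hN0 hNodd l
      set P := om N ^ (l*j) with hP
      have hPne : P ≠ 0 := by
        rw [hP, om]
        exact pow_ne_zero _ (Complex.exp_ne_zero _)
      have hPexp : Complex.exp (((2*π*((l:ℝ)*j)/N : ℝ):ℂ) * Complex.I) = P := by
        rw [hP, om, ← Complex.exp_nat_mul]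
        congr 1
        push_cast
        ring
      have hQ : om N ^ (l*(N-j)) = P⁻¹ := by
        refine eq_inv_of_mul_eq_one_left ?_
        rw [hP, ← pow_add, show l*(N-j) + l*j = N*l from by
          rw [← Nat.mul_add, show N-j+j = N from by omega]; ring]
        rw [pow_mul, om_pow_N N hN0, one_pow]
      -- tan * sin = -(1-E^2)*(P⁻¹ - P)/(2*(E^2+1))
      have hced : E + E⁻¹ ≠ 0 := by
        intro h
        apply hWne
        have : E * (E + E⁻¹) = 0 := by rw [h, mul_zero]
        rw [mul_add, mul_inv_cancel₀ hEne] at this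
        linear_combination this
      have hcosE : Complex.cos ((π*l/N : ℝ):ℂ) = (E + E⁻¹)/2 := by
        rw [Complex.cos]
        simp only [neg_mul, Complex.exp_neg]
        try rw [← hE]
      have hcosne : Complex.cos ((π*l/N : ℝ):ℂ) ≠ 0 := by
        rw [hcosE]
        intro h
        exact hced (by linear_combination 2*h)
      have htan : Complex.tan ((π*l/N : ℝ):ℂ) = (1-E^2)*Complex.I/(E^2+1) := by
        rw [Complex.tan_eq_sin_div_cos, div_eq_div_iff hcosne hWne, hcosE, Complex.sin]
        simp only [neg_mul, Complex.exp_neg]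
        rw [← hE]
        field_simp
      have hsin : Complex.sin ((2*π*((l:ℝ)*j)/N : ℝ):ℂ) = (P⁻¹ - P)*Complex.I/2 := by
        rw [Complex.sin]
        simp only [neg_mul, Complex.exp_neg]
        rw [hPexp]
      have hts : Complex.tan ((π*l/N : ℝ):ℂ) * Complex.sin ((2*π*((l:ℝ)*j)/N : ℝ):ℂ)
          = -(1-E^2)*(P⁻¹-P)/(2*(E^2+1)) := by
        rw [htan, hsin]
        calc (1-E^2)*Complex.I/(E^2+1) * ((P⁻¹-P)*Complex.I/2)
            = (Complex.I*Complex.I) * ((1-E^2)*(P⁻¹-P)/(2*(E^2+1))) := by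
              field_simp
          _ = -(1-E^2)*(P⁻¹-P)/(2*(E^2+1)) := by rw [Complex.I_mul_I]; ring
      rw [hts]
      -- geometric expansion of 1/(E^2+1)
      have hgeom : ∑ r ∈ Finset.range N, (-1:ℂ)^r * (om N ^ l)^r = 2/(E^2+1) := by
        have h1 : ∑ r ∈ Finset.range N, (-1:ℂ)^r * (om N ^ l)^r
            = ∑ r ∈ Finset.range N, (-(om N ^ l))^r := by
          refine Finset.sum_congr rfl fun r _ => ?_
          rw [← mul_pow, neg_one_mul]
        have hne : (-(om N ^ l)) ≠ 1 := by
          intro hc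
          exact om_pow_ne_neg_one N hN0 hNodd l (by linear_combination -hc)
        have hden1 : -E^2 - 1 ≠ 0 := by
          intro hc
          exact hWne (by linear_combination -hc)
        rw [h1, geom_sum_eq hne, Odd.neg_pow hNodd, ← pow_mul, mul_comm l N, pow_mul,
          om_pow_N N hN0, one_pow, ← hE2]
        rw [div_eq_div_iff hden1 hWne]
        ring
      calc -(1-E^2)*(P⁻¹-P)/(2*(E^2+1))
          = -(1/4) * ((1-E^2)*(P⁻¹-P)) * (2/(E^2+1)) := by
            field_simp
            ring
        _ = -(1/4) * ((1-E^2)*(P⁻¹-P)) * ∑ r ∈ Finset.range N, (-1:ℂ)^r * (om N ^ l)^r := by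
            rw [hgeom]
        _ = ∑ r ∈ Finset.range N, (-(1/4) * (-1:ℂ)^r) *
              ((om N ^ ((N-j)+r))^l - (om N ^ (j+r))^l
                - (om N ^ ((N-j+1)+r))^l + (om N ^ ((j+1)+r))^l) := by
            rw [Finset.mul_sum]
            refine Finset.sum_congr rfl fun r _ => ?_
            rw [← om_mul_pow N (N-j) l r, ← om_mul_pow N j l r,
              ← om_mul_pow N (N-j+1) l r, ← om_mul_pow N (j+1) l r]
            rw [show l*(N-j+1) = l*(N-j) + l from by ring,
              show l*(j+1) = l*j + l from by ring, pow_add, pow_add]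
            rw [hQ, ← hP, ← hE2]
            field_simp
            ring
    rw [Finset.sum_congr rfl per_l, Finset.sum_comm]
    -- now sum over r of constants times four geometric sums
    have step2 : ∀ r ∈ Finset.range N,
        ∑ l ∈ Finset.range N, (-(1/4) * (-1:ℂ)^r) *
            ((om N ^ ((N-j)+r))^l - (om N ^ (j+r))^l
              - (om N ^ ((N-j+1)+r))^l + (om N ^ ((j+1)+r))^l)
          = (-(1/4)) * ((-1:ℂ)^r * (if N ∣ ((N-j)+r) then (N:ℂ) else 0)
              - (-1:ℂ)^r * (if N ∣ (j+r) then (N:ℂ) else 0)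
              - (-1:ℂ)^r * (if N ∣ ((N-j+1)+r) then (N:ℂ) else 0)
              + (-1:ℂ)^r * (if N ∣ ((j+1)+r) then (N:ℂ) else 0)) := by
      intro r _
      rw [← Finset.mul_sum]
      rw [Finset.sum_add_distrib, Finset.sum_sub_distrib, Finset.sum_sub_distrib]
      rw [om_geom N hN0, om_geom N hN0, om_geom N hN0, om_geom N hN0]
      ring
    rw [Finset.sum_congr rfl step2]
    rw [← Finset.mul_sum]
    rw [Finset.sum_add_distrib, Finset.sum_sub_distrib, Finset.sum_sub_distrib]
    rw [sum_neg_one_pow_ite N (N-j) j hN0 (by omega) ⟨1, by omega⟩,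
      sum_neg_one_pow_ite N j (N-j) hN0 (by omega) ⟨1, by omega⟩,
      sum_neg_one_pow_ite N (N-j+1) (j-1) hN0 (by omega) ⟨1, by omega⟩,
      sum_neg_one_pow_ite N (j+1) (N-j-1) hN0 (by omega) ⟨1, by omega⟩]
    -- parity bookkeeping
    have hx2 : (-1:ℂ)^j * (-1:ℂ)^j = 1 := by
      rw [← pow_add]
      exact Even.neg_one_pow ⟨j, by ring⟩
    have hNj : (-1:ℂ)^(N-j) = -(-1:ℂ)^j := by
      have h1 : (-1:ℂ)^(N-j) * (-1:ℂ)^j = -1 := by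
        rw [← pow_add, show N-j+j = N from by omega]
        exact Odd.neg_one_pow hNodd
      calc (-1:ℂ)^(N-j) = (-1:ℂ)^(N-j) * ((-1:ℂ)^j * (-1:ℂ)^j) := by rw [hx2, mul_one]
        _ = -(-1:ℂ)^j := by rw [← mul_assoc, h1]; ring
    have hj1' : (-1:ℂ)^(j-1) = -(-1:ℂ)^j := by
      have h1 : (-1:ℂ)^(j-1) * (-1:ℂ) = (-1:ℂ)^j := by
        rw [← pow_succ, show j-1+1 = j from by omega]
      calc (-1:ℂ)^(j-1) = (-1:ℂ)^(j-1) * (-1:ℂ) * (-1:ℂ) * (-1:ℂ) * (-1:ℂ) := by ring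
        _ = -(-1:ℂ)^j := by rw [h1]; ring
    have hNj1 : (-1:ℂ)^(N-j-1) = (-1:ℂ)^j := by
      have h1 : (-1:ℂ)^(N-j-1) * (-1:ℂ) = (-1:ℂ)^(N-j) := by
        rw [← pow_succ, show N-j-1+1 = N-j from by omega]
      have := h1
      rw [hNj] at this
      calc (-1:ℂ)^(N-j-1) = (-1:ℂ)^(N-j-1) * (-1:ℂ) * (-1:ℂ) * (-1:ℂ) * (-1:ℂ) := by ring
        _ = (-1:ℂ)^j := by rw [this]; ring
    rw [hNj, hj1', hNj1]
    push_cast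
    rw [hj1']
    ring
  exact_mod_cast key





lemma mode_eval (N l m x y k : ℕ) (hN : 5 ≤ N) (hNodd : Odd N)
    (hl1 : 1 ≤ l) (hl2 : l ≤ N-1) (hk : k < N) :
    Real.tan (π*l/N) * Real.sin (2*π*((l:ℝ)*(((x+2)%N : ℕ):ℝ) + (m:ℝ)*(y:ℝ))/N) *
        (1/(nuLM N l m ^ (2:ℤ) - nuLM N l m ^ (-2:ℤ))) * gg (nuLM N l m) N k
      + Real.tan (π*l/N) * Real.sin (2*π*((l:ℝ)*(((x+(N-2))%N : ℕ):ℝ) + (m:ℝ)*(y:ℝ))/N) *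
          (1/(nuLM N l m ^ (2:ℤ) - nuLM N l m ^ (-2:ℤ))) * gg (nuLM N l m) N k
      + Real.tan (π*l/N) * Real.sin (2*π*((l:ℝ)*(x:ℝ) + (m:ℝ)*(((y+2)%N : ℕ):ℝ))/N) *
          (1/(nuLM N l m ^ (2:ℤ) - nuLM N l m ^ (-2:ℤ))) * gg (nuLM N l m) N k
      + Real.tan (π*l/N) * Real.sin (2*π*((l:ℝ)*(x:ℝ) + (m:ℝ)*(((y+(N-2))%N : ℕ):ℝ))/N) *
          (1/(nuLM N l m ^ (2:ℤ) - nuLM N l m ^ (-2:ℤ))) * gg (nuLM N l m) N k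
      + Real.tan (π*l/N) * Real.sin (2*π*((l:ℝ)*(x:ℝ) + (m:ℝ)*(y:ℝ))/N) *
          (1/(nuLM N l m ^ (2:ℤ) - nuLM N l m ^ (-2:ℤ))) * gg (nuLM N l m) N ((k+2)%N)
      + Real.tan (π*l/N) * Real.sin (2*π*((l:ℝ)*(x:ℝ) + (m:ℝ)*(y:ℝ))/N) *
          (1/(nuLM N l m ^ (2:ℤ) - nuLM N l m ^ (-2:ℤ))) * gg (nuLM N l m) N ((k+(N-2))%N)
      - 6 * (Real.tan (π*l/N) * Real.sin (2*π*((l:ℝ)*(x:ℝ) + (m:ℝ)*(y:ℝ))/N) *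
          (1/(nuLM N l m ^ (2:ℤ) - nuLM N l m ^ (-2:ℤ))) * gg (nuLM N l m) N k)
      = if k = 0 then
          2 * Real.tan (π*l/N) * Real.sin (2*π*((l:ℝ)*(x:ℝ) + (m:ℝ)*(y:ℝ))/N)
        else 0 := by
  obtain ⟨hν, hνsq⟩ := nu_facts N l m hN hNodd hl1 hl2
  set ν := nuLM N l m with hνdef
  have hν0 : (0:ℝ) < ν := lt_trans one_pos hν
  have hzp : ν ^ (2:ℤ) - ν ^ (-2:ℤ) = ν^2 - (ν^2)⁻¹ := by
    rw [zpow_neg]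
    norm_cast
  have hwne : ν^2 - (ν^2)⁻¹ ≠ 0 := by
    have h1 : 1 < ν^2 := by nlinarith
    have h2 : (ν^2)⁻¹ < 1 := by
      rw [inv_lt_one_iff₀]
      right; exact h1
    intro hc
    nlinarith
  rw [hzp, sin_shift_p N l x m y (by omega), sin_shift_m N l x m y (by omega),
    sin_shift_p2 N l x m y (by omega), sin_shift_m2 N l x m y (by omega)]
  have hg := g_rec N hN hNodd ν hν k hk
  have hpm1 := sin_pm (2*π*((l:ℝ)*x + (m:ℝ)*y)/N) (4*π*l/N)
  have hpm2 := sin_pm (2*π*((l:ℝ)*x + (m:ℝ)*y)/N) (4*π*m/N)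
  rcases eq_or_ne k 0 with rfl | hk0
  · rw [if_pos rfl] at hg ⊢
    have hwinv : (1/(ν^2 - (ν^2)⁻¹)) * (ν^2 - (ν^2)⁻¹) = 1 :=
      one_div_mul_cancel hwne
    linear_combination
      (Real.tan (π*l/N) * (1/(ν^2 - (ν^2)⁻¹)) * gg ν N 0) * hpm1
      + (Real.tan (π*l/N) * (1/(ν^2 - (ν^2)⁻¹)) * gg ν N 0) * hpm2
      + (Real.tan (π*l/N) * Real.sin (2*π*((l:ℝ)*x + (m:ℝ)*y)/N) * (1/(ν^2 - (ν^2)⁻¹))) * hg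
      + (Real.tan (π*l/N) * Real.sin (2*π*((l:ℝ)*x + (m:ℝ)*y)/N) * (1/(ν^2 - (ν^2)⁻¹)) * gg ν N 0) * hνsq
      + (2 * Real.tan (π*l/N) * Real.sin (2*π*((l:ℝ)*x + (m:ℝ)*y)/N)) * hwinv
  · rw [if_neg hk0] at hg ⊢
    linear_combination
      (Real.tan (π*l/N) * (1/(ν^2 - (ν^2)⁻¹)) * gg ν N k) * hpm1
      + (Real.tan (π*l/N) * (1/(ν^2 - (ν^2)⁻¹)) * gg ν N k) * hpm2
      + (Real.tan (π*l/N) * Real.sin (2*π*((l:ℝ)*x + (m:ℝ)*y)/N) * (1/(ν^2 - (ν^2)⁻¹))) * hg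
      + (Real.tan (π*l/N) * Real.sin (2*π*((l:ℝ)*x + (m:ℝ)*y)/N) * (1/(ν^2 - (ν^2)⁻¹)) * gg ν N k) * hνsq

lemma dsum_add (s t : Finset ℕ) (f g : ℕ → ℕ → ℝ) :
    ((∑ l ∈ s, ∑ m ∈ t, f l m) + ∑ l ∈ s, ∑ m ∈ t, g l m)
      = ∑ l ∈ s, ∑ m ∈ t, (f l m + g l m) := by
  rw [← Finset.sum_add_distrib]
  exact Finset.sum_congr rfl fun l _ => by rw [← Finset.sum_add_distrib]

lemma dsum_sub (s t : Finset ℕ) (f g : ℕ → ℕ → ℝ) :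
    ((∑ l ∈ s, ∑ m ∈ t, f l m) - ∑ l ∈ s, ∑ m ∈ t, g l m)
      = ∑ l ∈ s, ∑ m ∈ t, (f l m - g l m) := by
  rw [← Finset.sum_sub_distrib]
  exact Finset.sum_congr rfl fun l _ => by rw [← Finset.sum_sub_distrib]

lemma dsum_mul (s t : Finset ℕ) (c : ℝ) (f : ℕ → ℕ → ℝ) :
    c * (∑ l ∈ s, ∑ m ∈ t, f l m) = ∑ l ∈ s, ∑ m ∈ t, c * f l m := by
  rw [Finset.mul_sum]
  exact Finset.sum_congr rfl fun l _ => by rw [Finset.mul_sum]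

/-- Let `N ≥ 5` be odd.  The explicit function
`p(a) = (1/(4N²)) Σ_{l=1}^{N-1} Σ_{m=0}^{N-1} tan(πl/N) sin(2π(l a₁ + m a₂)/N)
  · (1/(ν² - ν⁻²)) · ((ν^{ā₃} + ν^{N-ā₃})/(1-ν^N) + ((-ν)^{ā₃} + (-ν)^{N-ā₃})/(1+ν^N))`,
with `ν = ν_{l,m}`, solves the Poisson problem: `(Δp)(a) = (1/2)(-1)^{ā₁-1}` when
`ā₁ ≠ 0`, `ā₂ = 0`, `ā₃ = 0`, and `(Δp)(a) = 0` otherwise. -/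
theorem discLap_poisson_solution
    (N : ℕ) (hN : 5 ≤ N) (hNodd : Odd N)
    (p : (Fin 3 → ZMod N) → ℝ)
    (hp : ∀ a : Fin 3 → ZMod N,
      p a = (1 / (4 * (N : ℝ) ^ 2)) *
        ∑ l ∈ Finset.Icc 1 (N - 1), ∑ m ∈ Finset.range N,
          Real.tan (Real.pi * l / N) *
            Real.sin (2 * Real.pi * (l * (a 0).val + m * (a 1).val) / N) *
            (1 / (nuLM N l m ^ (2 : ℤ) - nuLM N l m ^ (-2 : ℤ))) *
            ((nuLM N l m ^ (a 2).val + nuLM N l m ^ (N - (a 2).val)) /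
                (1 - nuLM N l m ^ N) +
              ((-nuLM N l m) ^ (a 2).val + (-nuLM N l m) ^ (N - (a 2).val)) /
                (1 + nuLM N l m ^ N))) :
    ∀ a : Fin 3 → ZMod N,
      discLap N p a =
        if (a 0).val ≠ 0 ∧ (a 1).val = 0 ∧ (a 2).val = 0 then
          (1 / 2 : ℝ) * (-1 : ℝ) ^ ((a 0).val - 1)
        else 0 := by
  intro a
  haveI : NeZero N := ⟨by omega⟩
  have hNR : (N:ℝ) ≠ 0 := Nat.cast_ne_zero.mpr (by omega)
  set c : ℝ := 1 / (4 * (N : ℝ) ^ 2) with hc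
  set Q : ℕ → ℕ → ℕ → ℝ := fun x y k =>
    ∑ l ∈ Finset.Icc 1 (N - 1), ∑ m ∈ Finset.range N,
      Real.tan (π * l / N) *
        Real.sin (2 * π * ((l:ℝ) * (x:ℝ) + (m:ℝ) * (y:ℝ)) / N) *
        (1 / (nuLM N l m ^ (2 : ℤ) - nuLM N l m ^ (-2 : ℤ))) *
        gg (nuLM N l m) N k with hQ
  have hpQ : ∀ b : Fin 3 → ZMod N, p b = c * Q (b 0).val (b 1).val (b 2).val := by
    intro b
    rw [hp b, hQ]
    simp only [gg]
  -- value computations for shifted lattice points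
  have hv2 : (2 : ZMod N).val = 2 := by
    rw [show (2 : ZMod N) = ((2:ℕ) : ZMod N) from by norm_cast]
    exact ZMod.val_natCast_of_lt (by omega)
  have hvN2 : ((N-2:ℕ) : ZMod N).val = N-2 := ZMod.val_natCast_of_lt (by omega)
  have hadd : ∀ z : ZMod N, (z + 2).val = (z.val + 2) % N := by
    intro z; rw [ZMod.val_add, hv2]
  have hsub : ∀ z : ZMod N, (z - 2).val = (z.val + (N-2)) % N := by
    intro z
    have h0 : ((N-2:ℕ) : ZMod N) = -2 := by
      push_cast [Nat.cast_sub (show 2 ≤ N by omega)]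
      simp
    have h2 : (z - 2) = z + ((N-2:ℕ) : ZMod N) := by rw [h0]; ring
    rw [h2, ZMod.val_add, hvN2]
  have ca00 : (a + Pi.single (0:Fin 3) (2:ZMod N) : Fin 3 → ZMod N) 0 = a 0 + 2 := by simp
  have cs00 : (a - Pi.single (0:Fin 3) (2:ZMod N) : Fin 3 → ZMod N) 0 = a 0 - 2 := by simp
  have ca01 : (a + Pi.single (0:Fin 3) (2:ZMod N) : Fin 3 → ZMod N) 1 = a 1 := by
    simp [Pi.single_eq_of_ne (show (1:Fin 3) ≠ 0 by decide)]
  have cs01 : (a - Pi.single (0:Fin 3) (2:ZMod N) : Fin 3 → ZMod N) 1 = a 1 := by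
    simp [Pi.single_eq_of_ne (show (1:Fin 3) ≠ 0 by decide)]
  have ca02 : (a + Pi.single (0:Fin 3) (2:ZMod N) : Fin 3 → ZMod N) 2 = a 2 := by
    simp [Pi.single_eq_of_ne (show (2:Fin 3) ≠ 0 by decide)]
  have cs02 : (a - Pi.single (0:Fin 3) (2:ZMod N) : Fin 3 → ZMod N) 2 = a 2 := by
    simp [Pi.single_eq_of_ne (show (2:Fin 3) ≠ 0 by decide)]
  have ca10 : (a + Pi.single (1:Fin 3) (2:ZMod N) : Fin 3 → ZMod N) 0 = a 0 := by
    simp [Pi.single_eq_of_ne (show (0:Fin 3) ≠ 1 by decide)]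
  have cs10 : (a - Pi.single (1:Fin 3) (2:ZMod N) : Fin 3 → ZMod N) 0 = a 0 := by
    simp [Pi.single_eq_of_ne (show (0:Fin 3) ≠ 1 by decide)]
  have ca11 : (a + Pi.single (1:Fin 3) (2:ZMod N) : Fin 3 → ZMod N) 1 = a 1 + 2 := by simp
  have cs11 : (a - Pi.single (1:Fin 3) (2:ZMod N) : Fin 3 → ZMod N) 1 = a 1 - 2 := by simp
  have ca12 : (a + Pi.single (1:Fin 3) (2:ZMod N) : Fin 3 → ZMod N) 2 = a 2 := by
    simp [Pi.single_eq_of_ne (show (2:Fin 3) ≠ 1 by decide)]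
  have cs12 : (a - Pi.single (1:Fin 3) (2:ZMod N) : Fin 3 → ZMod N) 2 = a 2 := by
    simp [Pi.single_eq_of_ne (show (2:Fin 3) ≠ 1 by decide)]
  have ca20 : (a + Pi.single (2:Fin 3) (2:ZMod N) : Fin 3 → ZMod N) 0 = a 0 := by
    simp [Pi.single_eq_of_ne (show (0:Fin 3) ≠ 2 by decide)]
  have cs20 : (a - Pi.single (2:Fin 3) (2:ZMod N) : Fin 3 → ZMod N) 0 = a 0 := by
    simp [Pi.single_eq_of_ne (show (0:Fin 3) ≠ 2 by decide)]
  have ca21 : (a + Pi.single (2:Fin 3) (2:ZMod N) : Fin 3 → ZMod N) 1 = a 1 := by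
    simp [Pi.single_eq_of_ne (show (1:Fin 3) ≠ 2 by decide)]
  have cs21 : (a - Pi.single (2:Fin 3) (2:ZMod N) : Fin 3 → ZMod N) 1 = a 1 := by
    simp [Pi.single_eq_of_ne (show (1:Fin 3) ≠ 2 by decide)]
  have ca22 : (a + Pi.single (2:Fin 3) (2:ZMod N) : Fin 3 → ZMod N) 2 = a 2 + 2 := by simp
  have cs22 : (a - Pi.single (2:Fin 3) (2:ZMod N) : Fin 3 → ZMod N) 2 = a 2 - 2 := by simp
  have e1 : p (a + Pi.single (0:Fin 3) (2:ZMod N)) = c * Q (((a 0).val + 2) % N) (a 1).val (a 2).val := by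
    rw [hpQ, ca00, ca01, ca02, hadd]
  have e2 : p (a - Pi.single (0:Fin 3) (2:ZMod N)) = c * Q (((a 0).val + (N-2)) % N) (a 1).val (a 2).val := by
    rw [hpQ, cs00, cs01, cs02, hsub]
  have e3 : p (a + Pi.single (1:Fin 3) (2:ZMod N)) = c * Q (a 0).val (((a 1).val + 2) % N) (a 2).val := by
    rw [hpQ, ca10, ca11, ca12, hadd]
  have e4 : p (a - Pi.single (1:Fin 3) (2:ZMod N)) = c * Q (a 0).val (((a 1).val + (N-2)) % N) (a 2).val := by
    rw [hpQ, cs10, cs11, cs12, hsub]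
  have e5 : p (a + Pi.single (2:Fin 3) (2:ZMod N)) = c * Q (a 0).val (a 1).val (((a 2).val + 2) % N) := by
    rw [hpQ, ca20, ca21, ca22, hadd]
  have e6 : p (a - Pi.single (2:Fin 3) (2:ZMod N)) = c * Q (a 0).val (a 1).val (((a 2).val + (N-2)) % N) := by
    rw [hpQ, cs20, cs21, cs22, hsub]
  -- the key recurrence for Q
  have hQrec : ∀ x y k : ℕ, k < N →
      Q ((x+2)%N) y k + Q ((x+(N-2))%N) y k + Q x ((y+2)%N) k + Q x ((y+(N-2))%N) k
        + Q x y ((k+2)%N) + Q x y ((k+(N-2))%N) - 6 * Q x y k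
      = if k = 0 then
          ∑ l ∈ Finset.Icc 1 (N - 1), ∑ m ∈ Finset.range N,
            2 * Real.tan (π*l/N) * Real.sin (2*π*((l:ℝ)*(x:ℝ) + (m:ℝ)*(y:ℝ))/N)
        else 0 := by
    intro x y k hk
    rw [hQ]
    simp only
    rw [dsum_add, dsum_add, dsum_add, dsum_add, dsum_add, dsum_mul, dsum_sub]
    rw [Finset.sum_congr rfl (fun l hl => Finset.sum_congr rfl (fun m _ => by
      have hlm := Finset.mem_Icc.mp hl
      exact mode_eval N l m x y k hN hNodd hlm.1 hlm.2 hk))]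
    by_cases hk0 : k = 0
    · simp [hk0]
    · simp [hk0]
  have hkval := hQrec (a 0).val (a 1).val (a 2).val (ZMod.val_lt _)
  have final : discLap N p a
      = if (a 2).val = 0 then
          c * ∑ l ∈ Finset.Icc 1 (N - 1), ∑ m ∈ Finset.range N,
            2 * Real.tan (π*l/N) *
              Real.sin (2*π*((l:ℝ)*((a 0).val:ℝ) + (m:ℝ)*((a 1).val:ℝ))/N)
        else 0 := by
    rw [discLap, Fin.sum_univ_three, e1, e2, e3, e4, e5, e6, hpQ a]
    by_cases hk0 : (a 2).val = 0
    · rw [if_pos hk0]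
      rw [if_pos hk0] at hkval
      linear_combination c * hkval
    · rw [if_neg hk0]
      rw [if_neg hk0] at hkval
      linear_combination c * hkval
  rw [final]
  by_cases hk0 : (a 2).val = 0
  · rw [if_pos hk0]
    by_cases hy0 : (a 1).val = 0
    · -- y = 0 case
      rw [hy0]
      by_cases hx0 : (a 0).val = 0
      · rw [hx0]
        rw [if_neg (by tauto)]
        have : ∀ l ∈ Finset.Icc 1 (N-1), ∀ m ∈ Finset.range N,
            2 * Real.tan (π*l/N) *
              Real.sin (2*π*((l:ℝ)*((0:ℕ):ℝ) + (m:ℝ)*((0:ℕ):ℝ))/N) = 0 := by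
          intro l _ m _
          norm_num
        rw [Finset.sum_congr rfl (fun l hl => Finset.sum_congr rfl (fun m hm => this l hl m hm))]
        simp
      · rw [if_pos ⟨hx0, rfl, hk0⟩]
        -- inner sum over m is constant
        have hin : ∀ l ∈ Finset.Icc 1 (N-1),
            (∑ m ∈ Finset.range N, 2 * Real.tan (π*l/N) *
              Real.sin (2*π*((l:ℝ)*((a 0).val:ℝ) + (m:ℝ)*((0:ℕ):ℝ))/N))
            = (N:ℝ) * (2 * Real.tan (π*l/N) * Real.sin (2*π*((l:ℝ)*((a 0).val:ℝ))/N)) := by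
          intro l _
          rw [Finset.sum_congr rfl (fun m _ => by norm_num : ∀ m ∈ Finset.range N,
            2 * Real.tan (π*l/N) *
              Real.sin (2*π*((l:ℝ)*((a 0).val:ℝ) + (m:ℝ)*((0:ℕ):ℝ))/N)
            = 2 * Real.tan (π*l/N) * Real.sin (2*π*((l:ℝ)*((a 0).val:ℝ))/N))]
          rw [Finset.sum_const, Finset.card_range, nsmul_eq_mul]
        rw [Finset.sum_congr rfl hin]
        -- convert Icc to range and apply tan_sum
        have hins : Finset.range N = insert 0 (Finset.Icc 1 (N-1)) := by
          ext r
          simp only [Finset.mem_range, Finset.mem_insert, Finset.mem_Icc]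
          omega
        have h0notin : (0:ℕ) ∉ Finset.Icc 1 (N-1) := by simp
        have hts := tan_sum N hN hNodd (a 0).val (by omega) (by
          have := ZMod.val_lt (a 0); omega)
        rw [hins, Finset.sum_insert h0notin] at hts
        simp only [Nat.cast_zero, mul_zero, zero_div, Real.tan_zero, zero_mul, zero_add] at hts
        have hsum2 : ∑ l ∈ Finset.Icc 1 (N-1),
            (N:ℝ) * (2 * Real.tan (π*l/N) * Real.sin (2*π*((l:ℝ)*((a 0).val:ℝ))/N))
            = (N:ℝ) * 2 * ∑ l ∈ Finset.Icc 1 (N-1),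
                Real.tan (π*l/N) * Real.sin (2*π*((l:ℝ)*((a 0).val:ℝ))/N) := by
          rw [Finset.mul_sum]
          exact Finset.sum_congr rfl fun l _ => by ring
        rw [hsum2, hts, hc]
        field_simp
        ring
    · -- y ≠ 0 : inner sums vanish
      rw [if_neg (by tauto)]
      have hin : ∀ l ∈ Finset.Icc 1 (N-1),
          (∑ m ∈ Finset.range N, 2 * Real.tan (π*l/N) *
            Real.sin (2*π*((l:ℝ)*((a 0).val:ℝ) + (m:ℝ)*((a 1).val:ℝ))/N)) = 0 := by
        intro l _
        have harg : ∀ m : ℕ, (2*π*((l:ℝ)*((a 0).val:ℝ) + (m:ℝ)*((a 1).val:ℝ))/N)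
            = 2*π*((l:ℝ)*((a 0).val:ℝ))/N + 2*π*((a 1).val:ℕ)/N*(m:ℝ) := by
          intro m
          field_simp
        rw [Finset.sum_congr rfl (fun m _ => by rw [harg m] :
          ∀ m ∈ Finset.range N, 2 * Real.tan (π*l/N) *
            Real.sin (2*π*((l:ℝ)*((a 0).val:ℝ) + (m:ℝ)*((a 1).val:ℝ))/N)
          = 2 * Real.tan (π*l/N) *
            Real.sin (2*π*((l:ℝ)*((a 0).val:ℝ))/N + 2*π*((a 1).val:ℕ)/N*(m:ℝ)))]
        rw [← Finset.mul_sum]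
        rw [sum_sin_zero N (by omega) (a 1).val (ZMod.val_lt _) hy0]
        ring
      rw [Finset.sum_congr rfl hin]
      simp
  · rw [if_neg hk0, if_neg (by tauto)]
end
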